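/- With φ as above (φ(p) = p(1-p)|h₂-h₁|^q / (p^{1/(q-1)} + (1-p)^{1/(q-1)})^{q-1} for q > 1), the second derivative of φ on (0,1) is φ''(p) = -(q/(q-1)) · (p(1-p))^{(2-q)/(q-1)} · |h₂-h₁|^q / (p^{1/(q-1)} + (1-p)^{1/(q-1)})^{q+1}. -/

import Mathlib

open Real

/-- Second derivative of `φ(p) = p(1-p)|h₂-h₁|^q / (p^{1/(q-1)} + (1-p)^{1/(q-1)})^{q-1}`
on `(0,1)`:
`φ''(p) = -(q/(q-1)) (p(1-p))^{(2-q)/(q-1)} |h₂-h₁|^q / (p^{1/(q-1)} + (1-p)^{1/(q-1)})^{q+1}`. -/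
theorem phi_lq_second_deriv (q h₁ h₂ : ℝ) (hq : 1 < q) (hne : h₁ ≠ h₂)
    (p : ℝ) (hp : p ∈ Set.Ioo (0 : ℝ) 1) :
    deriv (deriv (fun x : ℝ => x * (1 - x) * |h₂ - h₁| ^ q /
        (x ^ ((1 : ℝ) / (q - 1)) + (1 - x) ^ ((1 : ℝ) / (q - 1))) ^ (q - 1))) p =
      -(q / (q - 1)) * (p * (1 - p)) ^ ((2 - q) / (q - 1)) * |h₂ - h₁| ^ q /
        (p ^ ((1 : ℝ) / (q - 1)) + (1 - p) ^ ((1 : ℝ) / (q - 1))) ^ (q + 1) := by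
  obtain ⟨hp0, hp1⟩ := hp
  have hp1' : (0 : ℝ) < 1 - p := by linarith
  have hq0 : (0 : ℝ) < q - 1 := by linarith
  have hqne : q - 1 ≠ 0 := ne_of_gt hq0
  set c := |h₂ - h₁| ^ q with hc
  set α := (1 : ℝ) / (q - 1) with hαdef
  have hα : 0 < α := by rw [hαdef]; positivity
  have hαq : α * (q - 1) = 1 := by rw [hαdef]; field_simp
  -- the auxiliary functions
  set g : ℝ → ℝ := fun x => c * (x ^ (-α) + (1 - x) ^ (-α)) ^ (1 - q) with hg
  set D1 : ℝ → ℝ := fun x => c * ((1 - q) * ((x ^ (-α) + (1 - x) ^ (-α)) ^ (-q) *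
      (α * (1 - x) ^ (-α - 1) - α * x ^ (-α - 1)))) with hD1
  -- g has derivative D1 on (0,1)
  have key1 : ∀ x ∈ Set.Ioo (0 : ℝ) 1, HasDerivAt g (D1 x) x := by
    intro x hx
    obtain ⟨hx0, hx1⟩ := hx
    have hx1' : (0 : ℝ) < 1 - x := by linarith
    have hTpos : 0 < x ^ (-α) + (1 - x) ^ (-α) := by positivity
    have h1 : HasDerivAt (fun y : ℝ => y ^ (-α)) (-α * x ^ (-α - 1)) x :=
      Real.hasDerivAt_rpow_const (Or.inl hx0.ne')
    have hlin : HasDerivAt (fun y : ℝ => 1 - y) (-1) x := by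
      simpa using (hasDerivAt_id x).const_sub 1
    have h2 : HasDerivAt (fun y : ℝ => (1 - y) ^ (-α)) (α * (1 - x) ^ (-α - 1)) x := by
      have := (Real.hasDerivAt_rpow_const (x := 1 - x) (p := -α)
        (Or.inl hx1'.ne')).comp x hlin
      exact this.congr_deriv (by ring)
    have hT' : HasDerivAt (fun y : ℝ => y ^ (-α) + (1 - y) ^ (-α))
        (-α * x ^ (-α - 1) + α * (1 - x) ^ (-α - 1)) x := h1.add h2
    have := (hT'.rpow_const (p := 1 - q) (Or.inl hTpos.ne')).const_mul c
    refine this.congr_deriv ?_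
    rw [hD1, show (1 - q - 1 : ℝ) = -q by ring]
    ring
  -- the original function agrees with g on (0,1)
  have hfg : ∀ x ∈ Set.Ioo (0 : ℝ) 1,
      x * (1 - x) * c / (x ^ α + (1 - x) ^ α) ^ (q - 1) = g x := by
    intro x hx
    obtain ⟨hx0, hx1⟩ := hx
    have hx1' : (0 : ℝ) < 1 - x := by linarith
    have hr : (0 : ℝ) < x * (1 - x) := by positivity
    have hTpos : 0 < x ^ (-α) + (1 - x) ^ (-α) := by positivity
    have e1 : x ^ α * x ^ (-α) = 1 := by
      rw [← Real.rpow_add hx0]; simp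
    have e2 : (1 - x) ^ α * (1 - x) ^ (-α) = 1 := by
      rw [← Real.rpow_add hx1']; simp
    have hS : x ^ α + (1 - x) ^ α =
        (x * (1 - x)) ^ α * (x ^ (-α) + (1 - x) ^ (-α)) := by
      rw [Real.mul_rpow hx0.le hx1'.le]
      linear_combination (-(1 - x) ^ α) * e1 + (-(x ^ α)) * e2
    have hrq : ((x * (1 - x)) ^ α) ^ (q - 1) = x * (1 - x) := by
      rw [← Real.rpow_mul hr.le, hαq, Real.rpow_one]
    rw [hS, Real.mul_rpow (Real.rpow_nonneg hr.le α) hTpos.le, hrq]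
    simp only [hg]
    rw [show (1 - q : ℝ) = -(q - 1) by ring, Real.rpow_neg hTpos.le]
    have hTq : (0 : ℝ) < (x ^ (-α) + (1 - x) ^ (-α)) ^ (q - 1) :=
      Real.rpow_pos_of_pos hTpos _
    field_simp
  -- reduce to the derivative of D1
  have hmem : ∀ᶠ x in nhds p, x ∈ Set.Ioo (0 : ℝ) 1 :=
    isOpen_Ioo.eventually_mem ⟨hp0, hp1⟩
  have hev0 : (fun x : ℝ => x * (1 - x) * c / (x ^ α + (1 - x) ^ α) ^ (q - 1))
      =ᶠ[nhds p] g := by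
    filter_upwards [hmem] with x hx using hfg x hx
  have hev1 : deriv g =ᶠ[nhds p] D1 := by
    filter_upwards [hmem] with x hx using (key1 x hx).deriv
  rw [(hev0.deriv.trans hev1).deriv_eq]
  -- compute the derivative of D1 at p
  have hTpos : 0 < p ^ (-α) + (1 - p) ^ (-α) := by positivity
  have h1 : HasDerivAt (fun y : ℝ => y ^ (-α)) (-α * p ^ (-α - 1)) p :=
    Real.hasDerivAt_rpow_const (Or.inl hp0.ne')
  have hlin : HasDerivAt (fun y : ℝ => 1 - y) (-1) p := by
    simpa using (hasDerivAt_id p).const_sub 1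
  have h2 : HasDerivAt (fun y : ℝ => (1 - y) ^ (-α)) (α * (1 - p) ^ (-α - 1)) p := by
    have := (Real.hasDerivAt_rpow_const (x := 1 - p) (p := -α)
      (Or.inl hp1'.ne')).comp p hlin
    exact this.congr_deriv (by ring)
  have hT' : HasDerivAt (fun y : ℝ => y ^ (-α) + (1 - y) ^ (-α))
      (-α * p ^ (-α - 1) + α * (1 - p) ^ (-α - 1)) p := h1.add h2
  have hTq : HasDerivAt (fun y : ℝ => (y ^ (-α) + (1 - y) ^ (-α)) ^ (-q))
      ((-α * p ^ (-α - 1) + α * (1 - p) ^ (-α - 1)) * (-q) *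
        (p ^ (-α) + (1 - p) ^ (-α)) ^ (-q - 1)) p :=
    hT'.rpow_const (Or.inl hTpos.ne')
  have h3 : HasDerivAt (fun y : ℝ => y ^ (-α - 1)) ((-α - 1) * p ^ (-α - 1 - 1)) p :=
    Real.hasDerivAt_rpow_const (Or.inl hp0.ne')
  have h4 : HasDerivAt (fun y : ℝ => (1 - y) ^ (-α - 1))
      ((-α - 1) * (1 - p) ^ (-α - 1 - 1) * (-1)) p :=
    (Real.hasDerivAt_rpow_const (x := 1 - p) (p := -α - 1)
      (Or.inl hp1'.ne')).comp p hlin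
  have hW : HasDerivAt (fun y : ℝ => α * (1 - y) ^ (-α - 1) - α * y ^ (-α - 1))
      (α * ((-α - 1) * (1 - p) ^ (-α - 1 - 1) * (-1)) - α * ((-α - 1) * p ^ (-α - 1 - 1))) p :=
    (h4.const_mul α).sub (h3.const_mul α)
  have hD1' : HasDerivAt D1
      (c * ((1 - q) *
        (((-α * p ^ (-α - 1) + α * (1 - p) ^ (-α - 1)) * (-q) *
            (p ^ (-α) + (1 - p) ^ (-α)) ^ (-q - 1)) *
          (α * (1 - p) ^ (-α - 1) - α * p ^ (-α - 1)) +
        (p ^ (-α) + (1 - p) ^ (-α)) ^ (-q) *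
          (α * ((-α - 1) * (1 - p) ^ (-α - 1 - 1) * (-1)) -
            α * ((-α - 1) * p ^ (-α - 1 - 1)))))) p :=
    ((hTq.mul hW).const_mul (1 - q)).const_mul c
  rw [hD1'.deriv]
  -- now the algebraic identity
  have hr : (0 : ℝ) < p * (1 - p) := by positivity
  have ea1 : p ^ (-α - 1) = p ^ (-α) * p⁻¹ := by
    rw [show (-α - 1 : ℝ) = -α + -1 by ring, Real.rpow_add hp0, Real.rpow_neg_one]
  have eb1 : (1 - p) ^ (-α - 1) = (1 - p) ^ (-α) * (1 - p)⁻¹ := by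
    rw [show (-α - 1 : ℝ) = -α + -1 by ring, Real.rpow_add hp1', Real.rpow_neg_one]
  have ea2 : p ^ (-α - 1 - 1) = p ^ (-α) * p⁻¹ * p⁻¹ := by
    rw [show (-α - 1 - 1 : ℝ) = -α + -1 + -1 by ring, Real.rpow_add hp0,
      Real.rpow_add hp0, Real.rpow_neg_one]
  have eb2 : (1 - p) ^ (-α - 1 - 1) = (1 - p) ^ (-α) * (1 - p)⁻¹ * (1 - p)⁻¹ := by
    rw [show (-α - 1 - 1 : ℝ) = -α + -1 + -1 by ring, Real.rpow_add hp1',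
      Real.rpow_add hp1', Real.rpow_neg_one]
  have eT : (p ^ (-α) + (1 - p) ^ (-α)) ^ (-q - 1) =
      (p ^ (-α) + (1 - p) ^ (-α)) ^ (-q) * (p ^ (-α) + (1 - p) ^ (-α))⁻¹ := by
    rw [show (-q - 1 : ℝ) = -q + -1 by ring, Real.rpow_add hTpos, Real.rpow_neg_one]
  have e1 : p ^ α * p ^ (-α) = 1 := by rw [← Real.rpow_add hp0]; simp
  have e2 : (1 - p) ^ α * (1 - p) ^ (-α) = 1 := by rw [← Real.rpow_add hp1']; simp
  have hS' : p ^ α + (1 - p) ^ α =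
      (p * (1 - p)) ^ α * (p ^ (-α) + (1 - p) ^ (-α)) := by
    rw [Real.mul_rpow hp0.le hp1'.le]
    linear_combination (-(1 - p) ^ α) * e1 + (-(p ^ α)) * e2
  have hTqinv : (p ^ (-α) + (1 - p) ^ (-α)) ^ q =
      ((p ^ (-α) + (1 - p) ^ (-α)) ^ (-q))⁻¹ := by
    rw [Real.rpow_neg hTpos.le, inv_inv]
  have hSq : (p ^ α + (1 - p) ^ α) ^ (q + 1) =
      ((p * (1 - p)) ^ α) ^ (q + 1) *
        (((p ^ (-α) + (1 - p) ^ (-α)) ^ (-q))⁻¹ * (p ^ (-α) + (1 - p) ^ (-α))) := by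
    rw [hS', Real.mul_rpow (Real.rpow_nonneg hr.le α) hTpos.le,
      Real.rpow_add hTpos q 1, Real.rpow_one, hTqinv]
  have hexp : (2 - q) / (q - 1) = α * (q + 1) + (-α + (-1 + -1)) := by
    rw [hαdef]; field_simp; ring
  have hRexp : (p * (1 - p)) ^ ((2 - q) / (q - 1)) =
      ((p * (1 - p)) ^ α) ^ (q + 1) *
        ((p ^ (-α) * (1 - p) ^ (-α)) * (p⁻¹ * (1 - p)⁻¹ * (p⁻¹ * (1 - p)⁻¹))) := by
    rw [hexp, Real.rpow_add hr, Real.rpow_add hr, Real.rpow_add hr, Real.rpow_neg_one,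
      Real.mul_rpow hp0.le hp1'.le (z := -α), Real.rpow_mul hr.le, mul_inv]
  rw [ea1, eb1, ea2, eb2, eT, hSq, hRexp]
  have hA : (0 : ℝ) < p ^ (-α) := Real.rpow_pos_of_pos hp0 _
  have hB : (0 : ℝ) < (1 - p) ^ (-α) := Real.rpow_pos_of_pos hp1' _
  have ht : (0 : ℝ) < (p ^ (-α) + (1 - p) ^ (-α)) ^ (-q) := Real.rpow_pos_of_pos hTpos _
  have hR : (0 : ℝ) < ((p * (1 - p)) ^ α) ^ (q + 1) :=
    Real.rpow_pos_of_pos (Real.rpow_pos_of_pos hr α) _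
  set A := p ^ (-α) with hA'
  set B := (1 - p) ^ (-α) with hB'
  set t := (A + B) ^ (-q) with ht'
  set R := ((p * (1 - p)) ^ α) ^ (q + 1) with hR'
  rw [hαdef]
  field_simp
  ring
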